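/- Let X = (X₁,...,X_m) be a non-degenerate multi-self-similar ℝ^m-valued random field on T = [0,∞)^d with scaling function f = (f₁,...,f_m) : (0,∞)^d → (0,∞)^m. Then there exist nonnegative real numbers H_i^{(j)} (1 ≤ i ≤ d, 1 ≤ j ≤ m) such that f_j(a) = ∏_{i=1}^d a_i^{H_i^{(j)}} for every a ∈ (0,∞)^d and every j. -/

import Mathlib

open MeasureTheory Filter Topology

/-- If `ψ` is strictly antitone on `[0,∞)` and `ψ (c n) → ψ c0` with `c n, c0 ≥ 0`,
then `c n → c0`. -/
lemma aux_tendsto_of_strictAntiOn {ψ : ℝ → ℝ} (hψ : StrictAntiOn ψ (Set.Ici 0))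
    {c : ℕ → ℝ} {c0 : ℝ} (hc : ∀ n, 0 ≤ c n) (hc0 : 0 ≤ c0)
    (h : Tendsto (fun n => ψ (c n)) atTop (𝓝 (ψ c0))) : Tendsto c atTop (𝓝 c0) := by
  rw [tendsto_order]
  constructor
  · intro b hb
    rcases lt_or_ge b 0 with hb0 | hb0
    · exact Eventually.of_forall fun n => lt_of_lt_of_le hb0 (hc n)
    · have hlt : ψ c0 < ψ b := hψ (Set.mem_Ici.mpr hb0) (Set.mem_Ici.mpr hc0) hb
      filter_upwards [h.eventually_lt_const hlt] with n hn
      by_contra hcn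
      push_neg at hcn
      rcases hcn.lt_or_eq with h1 | h1
      · exact absurd (hψ (Set.mem_Ici.mpr (hc n)) (Set.mem_Ici.mpr hb0) h1) (by
          intro h2; exact absurd (h2.trans hn) (lt_irrefl _))
      · rw [h1] at hn; exact lt_irrefl _ hn
  · intro b hb
    have hlt : ψ b < ψ c0 := hψ (Set.mem_Ici.mpr hc0) (Set.mem_Ici.mpr (hc0.trans hb.le)) hb
    filter_upwards [h.eventually_const_lt hlt] with n hn
    by_contra hcn
    push_neg at hcn
    rcases hcn.lt_or_eq with h1 | h1
    · exact absurd (hψ (Set.mem_Ici.mpr (hc0.trans hb.le)) (Set.mem_Ici.mpr (hc n)) h1) (by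
        intro h2; exact absurd (hn.trans h2) (lt_irrefl _))
    · rw [← h1] at hn; exact lt_irrefl _ hn

lemma aux_prod_update {d : ℕ} (a : Fin d → ℝ) :
    (∏ i, Function.update (1 : Fin d → ℝ) i (a i)) = a := by
  funext i'
  rw [Finset.prod_apply, Finset.prod_eq_single i']
  · simp
  · intro i _ hne
    exact Function.update_of_ne (Ne.symm hne) _ _
  · simp

/-- Let `X = (X₁,...,X_m)` be a non-degenerate multi-self-similar
`ℝ^m`-valued random field on `T = [0,∞)^d` with scaling function
`f = (f₁,...,f_m) : (0,∞)^d → (0,∞)^m`: `X` is stochastically continuous and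
`{X(a·t)} =_{f.d.d.} {(f₁(a)X₁(t),...,f_m(a)X_m(t))}` for every `a ∈ (0,∞)^d`.
Then there exist nonnegative reals `H_i^{(j)}` with
`f_j(a) = ∏_{i=1}^d a_i^{H_i^{(j)}}` for every `a ∈ (0,∞)^d` and every `j`. -/
theorem stmt_9 {d m : ℕ} {Ω : Type*} [MeasurableSpace Ω]
    (P : Measure Ω) [IsProbabilityMeasure P]
    (X : (Fin d → ℝ) → Ω → (Fin m → ℝ))
    (hXmeas : ∀ t, Measurable (X t))
    -- stochastic continuity on `[0,∞)^d`
    (hXcont : ∀ t : Fin d → ℝ, (∀ i, 0 ≤ t i) →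
      ∀ u : ℕ → Fin d → ℝ, (∀ n i, 0 ≤ u n i) → Tendsto u atTop (𝓝 t) →
        TendstoInMeasure P (fun n => X (u n)) atTop (X t))
    (f : (Fin d → ℝ) → Fin m → ℝ)
    (hfpos : ∀ a : Fin d → ℝ, (∀ i, 0 < a i) → ∀ j, 0 < f a j)
    -- multi-self-similarity: equality of finite-dimensional distributions
    (hss : ∀ a : Fin d → ℝ, (∀ i, 0 < a i) →
      ∀ (k : ℕ) (t : Fin k → Fin d → ℝ), (∀ i i', 0 ≤ t i i') →
        Measure.map (fun ω => fun i => X (a * t i) ω) P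
          = Measure.map (fun ω => fun i => fun j => f a j * X (t i) ω j) P)
    -- non-degeneracy: `X_j(1,...,1)` is not a.s. constant
    (hnd : ∀ j, ¬ ∃ c : ℝ, ∀ᵐ ω ∂P, X (fun _ => 1) ω j = c) :
    ∃ H : Fin m → Fin d → ℝ, (∀ j i, 0 ≤ H j i) ∧
      ∀ a : Fin d → ℝ, (∀ i, 0 < a i) → ∀ j, f a j = ∏ i, a i ^ H j i := by
  classical
  -- basic measurability and integrability
  have hXjm : ∀ (b : Fin d → ℝ) (j : Fin m), Measurable fun ω => X b ω j :=
    fun b j => (measurable_pi_apply j).comp (hXmeas b)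
  have hint : ∀ (j : Fin m) (c : ℝ) (b : Fin d → ℝ),
      Integrable (fun ω => Real.exp (-(c * X b ω j) ^ 2)) P := by
    intro j c b
    refine (integrable_const (1 : ℝ)).mono' ?_ ?_
    · exact ((((hXjm b j).const_mul c).pow_const 2).neg.exp).aestronglyMeasurable
    · refine ae_of_all _ fun ω => ?_
      rw [Real.norm_eq_abs, Real.abs_exp]
      exact Real.exp_le_one_iff.mpr (neg_nonpos.mpr (sq_nonneg _))
  -- the key integral functional
  set E : Fin m → ℝ → (Fin d → ℝ) → ℝ :=
    fun j c b => ∫ ω, Real.exp (-(c * X b ω j) ^ 2) ∂P with hE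
  -- KEY1: scaling identity for E
  have key1 : ∀ (a : Fin d → ℝ), (∀ i, 0 < a i) → ∀ (b : Fin d → ℝ), (∀ i, 0 ≤ b i) →
      ∀ (j : Fin m) (c : ℝ), E j c (a * b) = E j (c * f a j) b := by
    intro a ha b hb j c
    have h := hss a ha 1 (fun _ => b) (fun _ i' => hb i')
    have hG : Continuous fun v : Fin 1 → Fin m → ℝ => Real.exp (-(c * v 0 j) ^ 2) := by
      fun_prop
    have hm1 : Measurable fun ω => fun i : Fin 1 => X (a * (fun _ : Fin 1 => b) i) ω :=
      measurable_pi_lambda _ fun i => hXmeas _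
    have hm2 : Measurable fun ω => fun i : Fin 1 =>
        fun j' => f a j' * X ((fun _ : Fin 1 => b) i) ω j' :=
      measurable_pi_lambda _ fun i => measurable_pi_lambda _ fun j' => (hXjm _ j').const_mul _
    have e1 : E j c (a * b) =
        ∫ v, Real.exp (-(c * v 0 j) ^ 2)
          ∂(Measure.map (fun ω => fun i : Fin 1 => X (a * (fun _ : Fin 1 => b) i) ω) P) :=
      (MeasureTheory.integral_map hm1.aemeasurable hG.aestronglyMeasurable).symm
    have e2 : (∫ v, Real.exp (-(c * v 0 j) ^ 2)
          ∂(Measure.map (fun ω => fun i : Fin 1 =>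
              fun j' => f a j' * X ((fun _ : Fin 1 => b) i) ω j') P))
        = E j (c * f a j) b := by
      rw [MeasureTheory.integral_map hm2.aemeasurable hG.aestronglyMeasurable]
      show (∫ ω, Real.exp (-(c * (f a j * X b ω j)) ^ 2) ∂P)
        = ∫ ω, Real.exp (-((c * f a j) * X b ω j) ^ 2) ∂P
      have : (fun ω => Real.exp (-(c * (f a j * X b ω j)) ^ 2))
          = fun ω => Real.exp (-((c * f a j) * X b ω j) ^ 2) := by
        funext ω; rw [mul_assoc]
      rw [this]
    rw [e1, h, e2]
  -- KEY2: E at a point in terms of E at 1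
  have key2 : ∀ (b : Fin d → ℝ), (∀ i, 0 < b i) → ∀ (j : Fin m) (c : ℝ),
      E j c b = E j (c * f b j) (1 : Fin d → ℝ) := by
    intro b hb j c
    have h := key1 b hb (1 : Fin d → ℝ) (fun i => zero_le_one) j c
    have hb1 : b * (1 : Fin d → ℝ) = b := funext fun i => mul_one (b i)
    rwa [hb1] at h
  -- strict antitonicity of c ↦ E j c 1 on [0,∞)
  have hψanti : ∀ j, StrictAntiOn (fun c => E j c (1 : Fin d → ℝ)) (Set.Ici 0) := by
    intro j c hc c' hc' hlt
    simp only [Set.mem_Ici] at hc hc'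
    have hgnn : ∀ ω, 0 ≤ Real.exp (-(c * X (1 : Fin d → ℝ) ω j) ^ 2)
        - Real.exp (-(c' * X (1 : Fin d → ℝ) ω j) ^ 2) := by
      intro ω
      have h1 : (c * X (1 : Fin d → ℝ) ω j) ^ 2 ≤ (c' * X (1 : Fin d → ℝ) ω j) ^ 2 := by
        rw [mul_pow, mul_pow]
        exact mul_le_mul_of_nonneg_right (pow_le_pow_left₀ hc hlt.le 2) (sq_nonneg _)
      have := Real.exp_le_exp.mpr (neg_le_neg h1)
      linarith
    have hgint : Integrable (fun ω => Real.exp (-(c * X (1 : Fin d → ℝ) ω j) ^ 2)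
        - Real.exp (-(c' * X (1 : Fin d → ℝ) ω j) ^ 2)) P :=
      (hint j c 1).sub (hint j c' 1)
    have hnonneg : 0 ≤ ∫ ω, (Real.exp (-(c * X (1 : Fin d → ℝ) ω j) ^ 2)
        - Real.exp (-(c' * X (1 : Fin d → ℝ) ω j) ^ 2)) ∂P := integral_nonneg hgnn
    have hne : (∫ ω, (Real.exp (-(c * X (1 : Fin d → ℝ) ω j) ^ 2)
        - Real.exp (-(c' * X (1 : Fin d → ℝ) ω j) ^ 2)) ∂P) ≠ 0 := by
      intro h0
      have hae := (integral_eq_zero_iff_of_nonneg hgnn hgint).mp h0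
      refine hnd j ⟨0, ?_⟩
      filter_upwards [hae] with ω hω
      simp only [Pi.zero_apply] at hω
      have hexp : Real.exp (-(c * X (1 : Fin d → ℝ) ω j) ^ 2)
          = Real.exp (-(c' * X (1 : Fin d → ℝ) ω j) ^ 2) := by linarith
      have h2 : (-(c * X (1 : Fin d → ℝ) ω j) ^ 2) = (-(c' * X (1 : Fin d → ℝ) ω j) ^ 2) :=
        Real.exp_injective hexp
      have hc2 : c ^ 2 < c' ^ 2 := by nlinarith
      have hz : X (1 : Fin d → ℝ) ω j ^ 2 = 0 := by nlinarith [sq_nonneg (X (1 : Fin d → ℝ) ω j)]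
      exact sq_eq_zero_iff.mp hz
    have hsub : (∫ ω, (Real.exp (-(c * X (1 : Fin d → ℝ) ω j) ^ 2)
        - Real.exp (-(c' * X (1 : Fin d → ℝ) ω j) ^ 2)) ∂P)
        = E j c (1 : Fin d → ℝ) - E j c' (1 : Fin d → ℝ) :=
      integral_sub (hint j c 1) (hint j c' 1)
    have hpos := lt_of_le_of_ne hnonneg (Ne.symm hne)
    rw [hsub] at hpos
    simpa using hpos
  -- continuity of E along in-measure convergence
  have EC : ∀ (j : Fin m) (c : ℕ → ℝ) (c0 : ℝ), Tendsto c atTop (𝓝 c0) →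
      ∀ (u : ℕ → Fin d → ℝ) (t : Fin d → ℝ), (∀ n i, 0 ≤ u n i) → (∀ i, 0 ≤ t i) →
      Tendsto u atTop (𝓝 t) →
      Tendsto (fun n => E j (c n) (u n)) atTop (𝓝 (E j c0 t)) := by
    intro j c c0 hc u t hu ht hut
    have him := hXcont t ht u hu hut
    refine tendsto_of_subseq_tendsto fun ns hns => ?_
    have him2 : TendstoInMeasure P (fun k => X (u (ns k))) atTop (X t) :=
      fun ε hε => (him ε hε).comp hns
    obtain ⟨ms, hms, hae⟩ := him2.exists_seq_tendsto_ae
    refine ⟨ms, ?_⟩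
    have hgoal : Tendsto (fun k => ∫ ω, Real.exp (-(c (ns (ms k)) * X (u (ns (ms k))) ω j) ^ 2) ∂P)
        atTop (𝓝 (∫ ω, Real.exp (-(c0 * X t ω j) ^ 2) ∂P)) := by
      refine tendsto_integral_of_dominated_convergence (fun _ => (1 : ℝ))
        (fun k => (hint j _ _).1) (integrable_const 1)
        (fun k => ae_of_all _ fun ω => ?_) ?_
      · rw [Real.norm_eq_abs, Real.abs_exp]
        exact Real.exp_le_one_iff.mpr (neg_nonpos.mpr (sq_nonneg _))
      · filter_upwards [hae] with ω hω
        have h1 : Tendsto (fun k => X (u (ns (ms k))) ω j) atTop (𝓝 (X t ω j)) :=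
          ((continuous_apply j).tendsto _).comp hω
        have h2 : Tendsto (fun k => c (ns (ms k))) atTop (𝓝 c0) :=
          hc.comp (hns.comp hms.tendsto_atTop)
        exact ((Real.continuous_exp.comp ((continuous_pow 2).neg)).tendsto _).comp (h2.mul h1)
    exact hgoal
  -- multiplicativity of f
  have hfmul : ∀ (a b : Fin d → ℝ), (∀ i, 0 < a i) → (∀ i, 0 < b i) →
      ∀ j, f (a * b) j = f a j * f b j := by
    intro a b ha hb j
    have hab : ∀ i, 0 < (a * b) i := fun i => mul_pos (ha i) (hb i)
    have h1 : E j 1 (a * b) = E j (1 * f (a * b) j) (1 : Fin d → ℝ) := key2 (a * b) hab j 1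
    have h2 : E j 1 (a * b) = E j (1 * f a j) b := key1 a ha b (fun i => (hb i).le) j 1
    have h3 : E j (1 * f a j) b = E j ((1 * f a j) * f b j) (1 : Fin d → ℝ) :=
      key2 b hb j (1 * f a j)
    have heq : E j (1 * f (a * b) j) (1 : Fin d → ℝ)
        = E j ((1 * f a j) * f b j) (1 : Fin d → ℝ) := by rw [← h1, h2, h3]
    have hpa := hfpos a ha j
    have hpb := hfpos b hb j
    have hpab := hfpos _ hab j
    have := (hψanti j).injOn
      (Set.mem_Ici.mpr (by nlinarith : (0:ℝ) ≤ 1 * f (a*b) j))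
      (Set.mem_Ici.mpr (by nlinarith : (0:ℝ) ≤ (1 * f a j) * f b j)) heq
    simpa using this
  -- f(1) = 1
  have hfone : ∀ j, f (1 : Fin d → ℝ) j = 1 := by
    intro j
    have h1 : E j 1 (1 : Fin d → ℝ) = E j (1 * f (1 : Fin d → ℝ) j) (1 : Fin d → ℝ) :=
      key2 (1 : Fin d → ℝ) (fun i => one_pos) j 1
    have hp := hfpos (1 : Fin d → ℝ) (fun i => one_pos) j
    have := (hψanti j).injOn (Set.mem_Ici.mpr zero_le_one)
      (Set.mem_Ici.mpr (by nlinarith : (0:ℝ) ≤ 1 * f (1 : Fin d → ℝ) j)) h1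
    simpa using this.symm
  -- sequential continuity of f at positive points
  have hfcont : ∀ (a : ℕ → Fin d → ℝ) (a0 : Fin d → ℝ), (∀ n i, 0 < a n i) →
      (∀ i, 0 < a0 i) → Tendsto a atTop (𝓝 a0) →
      ∀ j, Tendsto (fun n => f (a n) j) atTop (𝓝 (f a0 j)) := by
    intro a a0 ha ha0 hta j
    have hEt := EC j (fun _ => 1) 1 tendsto_const_nhds a a0 (fun n i => (ha n i).le)
      (fun i => (ha0 i).le) hta
    have hrw : (fun n => E j 1 (a n)) = fun n => E j (1 * f (a n) j) (1 : Fin d → ℝ) :=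
      funext fun n => key2 (a n) (ha n) j 1
    rw [hrw, key2 a0 ha0 j 1] at hEt
    have hcn : ∀ n, 0 ≤ 1 * f (a n) j := fun n => by
      rw [one_mul]; exact (hfpos (a n) (ha n) j).le
    have hc0' : (0:ℝ) ≤ 1 * f a0 j := by rw [one_mul]; exact (hfpos a0 ha0 j).le
    have := aux_tendsto_of_strictAntiOn (hψanti j) hcn hc0' hEt
    simpa using this
  -- updates
  have hupd_pos : ∀ (i : Fin d) {s : ℝ}, 0 < s →
      ∀ i', 0 < Function.update (1 : Fin d → ℝ) i s i' := by
    intro i s hs i'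
    rw [Function.update_apply]
    split
    · exact hs
    · exact one_pos
  have hupd_mul : ∀ (i : Fin d) (s s' : ℝ),
      Function.update (1 : Fin d → ℝ) i s * Function.update (1 : Fin d → ℝ) i s'
        = Function.update (1 : Fin d → ℝ) i (s * s') := by
    intro i s s'
    funext i'
    simp only [Pi.mul_apply, Function.update_apply, Pi.one_apply]
    split
    · rfl
    · exact mul_one 1
  -- the power law on coordinate axes
  have hpow : ∀ (j : Fin m) (i : Fin d) (s : ℝ), 0 < s →
      f (Function.update (1 : Fin d → ℝ) i s) j
        = s ^ Real.log (f (Function.update (1 : Fin d → ℝ) i (Real.exp 1)) j) := by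
    intro j i
    set g : ℝ → ℝ :=
      fun x => Real.log (f (Function.update (1 : Fin d → ℝ) i (Real.exp x)) j) with hgdef
    have hgadd : ∀ x y, g (x + y) = g x + g y := by
      intro x y
      have hupd : Function.update (1 : Fin d → ℝ) i (Real.exp (x + y))
          = Function.update (1 : Fin d → ℝ) i (Real.exp x)
            * Function.update (1 : Fin d → ℝ) i (Real.exp y) := by
        rw [hupd_mul, Real.exp_add]
      simp only [hgdef]
      rw [hupd, hfmul _ _ (hupd_pos i (Real.exp_pos x)) (hupd_pos i (Real.exp_pos y)) j,
        Real.log_mul (ne_of_gt (hfpos _ (hupd_pos i (Real.exp_pos x)) j))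
          (ne_of_gt (hfpos _ (hupd_pos i (Real.exp_pos y)) j))]
    have hgcont : Continuous g := by
      rw [continuous_iff_seqContinuous]
      intro x x0 hx
      have hu : Tendsto (fun n => Function.update (1 : Fin d → ℝ) i (Real.exp (x n))) atTop
          (𝓝 (Function.update (1 : Fin d → ℝ) i (Real.exp x0))) := by
        rw [tendsto_pi_nhds]
        intro i'
        by_cases h : i' = i
        · subst h
          simp only [Function.update_self]
          exact (Real.continuous_exp.tendsto x0).comp hx
        · simp only [Function.update_of_ne h]
          exact tendsto_const_nhds
      have hf := hfcont _ _ (fun n i' => hupd_pos i (Real.exp_pos (x n)) i')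
        (fun i' => hupd_pos i (Real.exp_pos x0) i') hu j
      exact ((Real.continuousAt_log
        (ne_of_gt (hfpos _ (fun i' => hupd_pos i (Real.exp_pos x0) i') j))).tendsto).comp hf
    have hglin : ∀ x : ℝ, g x = x * g 1 := by
      intro x
      set L := (AddMonoidHom.mk' g hgadd).toRealLinearMap hgcont with hL
      have h1 : ∀ y, L y = g y := fun y =>
        congrFun (AddMonoidHom.coe_toRealLinearMap (AddMonoidHom.mk' g hgadd) hgcont) y
      calc g x = L x := (h1 x).symm
        _ = L (x • (1 : ℝ)) := by rw [smul_eq_mul, mul_one]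
        _ = x • L 1 := L.map_smul x 1
        _ = x * g 1 := by rw [smul_eq_mul, h1]
    intro s hs
    have h1 : f (Function.update (1 : Fin d → ℝ) i s) j = Real.exp (g (Real.log s)) := by
      simp only [hgdef]
      rw [Real.exp_log hs, Real.exp_log (hfpos _ (hupd_pos i hs) j)]
    have hg1 : g 1 = Real.log (f (Function.update (1 : Fin d → ℝ) i (Real.exp 1)) j) := rfl
    rw [h1, hglin (Real.log s), Real.rpow_def_of_pos hs, hg1, mul_comm]
  -- nonnegativity of exponents
  have hH0 : ∀ (j : Fin m) (i : Fin d),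
      0 ≤ Real.log (f (Function.update (1 : Fin d → ℝ) i (Real.exp 1)) j) := by
    intro j i
    by_contra hneg
    push_neg at hneg
    set Hji := Real.log (f (Function.update (1 : Fin d → ℝ) i (Real.exp 1)) j) with hHji
    set s : ℕ → ℝ := fun n => ((n : ℝ) + 1)⁻¹ with hsdef
    have hs_pos : ∀ n, 0 < s n := fun n => by positivity
    have hnat : Tendsto (fun n : ℕ => (n : ℝ) + 1) atTop atTop :=
      tendsto_atTop_add_const_right _ 1 tendsto_natCast_atTop_atTop
    have hs0 : Tendsto s atTop (𝓝 0) := hnat.inv_tendsto_atTop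
    set c : ℕ → ℝ := fun n => f (Function.update (1 : Fin d → ℝ) i ((n : ℝ) + 1)) j with hcdef
    have hcval : ∀ n, c n = ((n : ℝ) + 1) ^ Hji := fun n => hpow j i _ (by positivity)
    have hc0 : Tendsto c atTop (𝓝 0) := by
      have h2 : Tendsto (fun x : ℝ => x ^ (-(-Hji))) atTop (𝓝 0) :=
        tendsto_rpow_neg_atTop (by linarith)
      rw [neg_neg] at h2
      have h3 := h2.comp hnat
      have hfun : c = fun n : ℕ => ((n : ℝ) + 1) ^ Hji := funext hcval
      rw [hfun]
      exact h3
    -- constant identity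
    have heq : ∀ n, E j 1 (1 : Fin d → ℝ)
        = E j (1 * c n) (Function.update (1 : Fin d → ℝ) i (s n)) := by
      intro n
      have h := key1 (Function.update (1 : Fin d → ℝ) i ((n : ℝ) + 1)) (hupd_pos i (by positivity))
        (Function.update (1 : Fin d → ℝ) i (s n)) (fun i' => (hupd_pos i (hs_pos n) i').le) j 1
      rw [hupd_mul] at h
      have hval : ((n : ℝ) + 1) * s n = 1 := by
        rw [hsdef]
        field_simp
      have hupd1 : Function.update (1 : Fin d → ℝ) i (1:ℝ) = 1 := by
        funext i'
        rw [Function.update_apply]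
        split
        · rfl
        · rfl
      rw [hval, hupd1] at h
      exact h
    -- limit of the RHS
    have hlim : Tendsto (fun n => E j (1 * c n) (Function.update (1 : Fin d → ℝ) i (s n))) atTop
        (𝓝 (E j (1 * 0) (Function.update (1 : Fin d → ℝ) i 0))) := by
      refine EC j (fun n => 1 * c n) (1 * 0) (tendsto_const_nhds.mul hc0) _ _
        (fun n i' => (hupd_pos i (hs_pos n) i').le) ?_ ?_
      · intro i'
        rw [Function.update_apply]
        split
        · exact le_refl 0
        · exact zero_le_one
      · rw [tendsto_pi_nhds]
        intro i'
        by_cases h : i' = i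
        · subst h
          simp only [Function.update_self]
          exact hs0
        · simp only [Function.update_of_ne h]
          exact tendsto_const_nhds
    have hconst : Tendsto (fun n => E j (1 * c n) (Function.update (1 : Fin d → ℝ) i (s n)))
        atTop (𝓝 (E j 1 (1 : Fin d → ℝ))) := by
      have : (fun n => E j (1 * c n) (Function.update (1 : Fin d → ℝ) i (s n)))
          = fun _ => E j 1 (1 : Fin d → ℝ) := funext fun n => (heq n).symm
      rw [this]
      exact tendsto_const_nhds
    have huniq : E j 1 (1 : Fin d → ℝ) = E j (1 * 0) (Function.update (1 : Fin d → ℝ) i 0) :=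
      tendsto_nhds_unique hconst hlim
    -- both E j 0 _ equal 1
    have hE0 : ∀ b : Fin d → ℝ, E j 0 b = 1 := by
      intro b
      have : (fun ω => Real.exp (-((0 : ℝ) * X b ω j) ^ 2)) = fun _ => (1 : ℝ) := by
        funext ω
        simp
      simp only [hE]
      rw [this]
      simp
    have h01 : E j (0 : ℝ) (1 : Fin d → ℝ) = E j 1 (1 : Fin d → ℝ) := by
      rw [hE0, huniq]
      have : (1 : ℝ) * 0 = 0 := mul_zero 1
      rw [this, hE0]
    have := (hψanti j).injOn (Set.mem_Ici.mpr (le_refl (0:ℝ)))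
      (Set.mem_Ici.mpr zero_le_one) h01
    exact zero_ne_one this
  -- conclusion
  refine ⟨fun j i => Real.log (f (Function.update (1 : Fin d → ℝ) i (Real.exp 1)) j), hH0, ?_⟩
  intro a ha j
  -- extend multiplicativity to finite products
  have hfprodset : ∀ (s : Finset (Fin d)) (g : Fin d → Fin d → ℝ), (∀ i i', 0 < g i i') →
      f (∏ i ∈ s, g i) j = ∏ i ∈ s, f (g i) j := by
    intro s
    induction s using Finset.induction with
    | empty => intro g hg; simpa using hfone j
    | insert i0 s0 hni ih =>
      intro g hg
      have hprodpos : ∀ i', 0 < (∏ i ∈ s0, g i) i' := by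
        intro i'
        rw [Finset.prod_apply]
        exact Finset.prod_pos fun i _ => hg i i'
      rw [Finset.prod_insert hni, Finset.prod_insert hni,
        hfmul _ _ (hg i0) hprodpos j, ih g hg]
  calc f a j = f (∏ i, Function.update (1 : Fin d → ℝ) i (a i)) j := by rw [aux_prod_update]
    _ = ∏ i, f (Function.update (1 : Fin d → ℝ) i (a i)) j :=
        hfprodset Finset.univ _ (fun i i' => hupd_pos i (ha i) i')
    _ = ∏ i, a i ^ Real.log (f (Function.update (1 : Fin d → ℝ) i (Real.exp 1)) j) :=
        Finset.prod_congr rfl fun i _ => hpow j i (a i) (ha i)
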